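/- arXiv:1012.3529 — 2 statements merged into one kernel-verified Lean document; each statement's English description precedes it below -/
import Mathlib

section
/- Let δ > 0, u ∈ H¹₀(Ω; ℝⁿ), θ a vector field supported in the boundary strip Γ_δ with |ρ²∇θ|_{L^∞(Γ_δ)} ≤ Cδ, where ρ = dist(·,∂Ω). Then |∫_Ω ((u·∇)θ)·u dx| ≤ C′ δ |∇u|²_{L²(Γ_δ)} for a constant C′ independent of δ, via the pointwise rewriting ((u·∇)θ)·u = ((u/ρ)·(ρ²∇)θ)·(u/ρ) and Hardy's inequality applied on Γ_δ. -/
open MeasureTheory ENNReal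

section Aux

variable {n : ℕ}

private lemma levelset_null (F : Set (EuclideanSpace ℝ (Fin n)))
    (hF : IsClosed F) (hne : F.Nonempty) {c : ℝ} (hc : 0 < c) :
    volume {x : EuclideanSpace ℝ (Fin n) | Metric.infDist x F = c} = 0 := by
  rcases subsingleton_or_nontrivial (EuclideanSpace ℝ (Fin n)) with hsub | hnt
  · have h : {x : EuclideanSpace ℝ (Fin n) | Metric.infDist x F = c} = ∅ := by
      ext x
      obtain ⟨y, hy⟩ := hne
      have hxy : x = y := Subsingleton.elim x y
      simp [hxy, Metric.infDist_zero_of_mem hy, hc.ne]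
    simp [h]
  · set S := {x : EuclideanSpace ℝ (Fin n) | Metric.infDist x F = c} with hSdef
    have hS : MeasurableSet S :=
      (isClosed_eq (Metric.continuous_infDist_pt F) continuous_const).measurableSet
    set d := Module.finrank ℝ (EuclideanSpace ℝ (Fin n)) with hd
    set κ : ℝ≥0∞ := ENNReal.ofReal ((1/4 : ℝ) ^ d) with hκdef
    have hκ0 : κ ≠ 0 := by
      simp only [hκdef, ne_eq, ENNReal.ofReal_eq_zero, not_le]
      positivity
    have hκ1 : κ ≤ 1 := by
      rw [hκdef, show (1 : ℝ≥0∞) = ENNReal.ofReal 1 by simp]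
      exact ENNReal.ofReal_le_ofReal (pow_le_one₀ (by norm_num) (by norm_num))
    have key : ∀ x ∈ S, ¬ Filter.Tendsto
        (fun r => volume (S ∩ Metric.closedBall x r) / volume (Metric.closedBall x r))
        (nhdsWithin 0 (Set.Ioi 0)) (nhds 1) := by
      intro x hx htt
      obtain ⟨p, hpF, hpd⟩ := hF.exists_infDist_eq_dist hne x
      have hxp : dist x p = c := by rw [← hpd]; exact hx
      have h1κ : (1 : ℝ≥0∞) - κ < 1 :=
        ENNReal.sub_lt_self (by simp) one_ne_zero hκ0
      have h1 : ∀ᶠ r in nhdsWithin 0 (Set.Ioi 0),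
          1 - κ < volume (S ∩ Metric.closedBall x r) / volume (Metric.closedBall x r) :=
        htt (Ioi_mem_nhds h1κ)
      have h2 : ∀ᶠ r in nhdsWithin (0:ℝ) (Set.Ioi 0), r ∈ Set.Ioo (0:ℝ) c :=
        Ioo_mem_nhdsGT_of_mem ⟨le_refl 0, hc⟩
      obtain ⟨r, hr1, hr2⟩ := (h1.and h2).exists
      obtain ⟨hr0, hrc⟩ := hr2
      -- geometric setup
      set z := x + (r/(2*c)) • (p - x) with hz
      have hpxnorm : ‖p - x‖ = c := by
        rw [← hxp, dist_eq_norm, norm_sub_rev]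
      have hzx : dist z x = r / 2 := by
        rw [dist_eq_norm, hz, add_sub_cancel_left, norm_smul, hpxnorm, Real.norm_eq_abs,
          abs_of_nonneg (by positivity)]
        field_simp
      have hzp : dist z p = c - r / 2 := by
        have hrepr : z - p = (1 - r/(2*c)) • (x - p) := by
          rw [hz]; rw [smul_sub, sub_smul, one_smul, smul_sub]
          abel
        rw [dist_eq_norm, hrepr, norm_smul, Real.norm_eq_abs, show ‖x - p‖ = c by
          rw [← dist_eq_norm, hxp]]
        rw [abs_of_nonneg (by rw [sub_nonneg]; rw [div_le_one (by positivity)]; linarith)]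
        field_simp
      have hsub1 : Metric.ball z (r/4) ⊆ Metric.closedBall x r := by
        intro y hy
        rw [Metric.mem_ball] at hy
        rw [Metric.mem_closedBall]
        calc dist y x ≤ dist y z + dist z x := dist_triangle y z x
          _ ≤ r/4 + r/2 := by linarith [hzx]
          _ ≤ r := by linarith
      have hsub2 : S ∩ Metric.closedBall x r ⊆
          Metric.closedBall x r \ Metric.ball z (r/4) := by
        rintro y ⟨hyS, hyB⟩
        refine ⟨hyB, fun hyb => ?_⟩
        rw [Metric.mem_ball] at hyb
        have : Metric.infDist y F < c := by
          calc Metric.infDist y F ≤ dist y p := Metric.infDist_le_dist_of_mem hpF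
            _ ≤ dist y z + dist z p := dist_triangle y z p
            _ < r/4 + (c - r/2) := by linarith [hzp]
            _ < c := by linarith
        exact absurd hyS (by simp [hSdef, this.ne])
      have hvb : volume (Metric.ball z (r/4)) = κ * volume (Metric.closedBall x r) := by
        rw [show (r/4 : ℝ) = (1/4)*r by ring,
          Measure.addHaar_ball_mul volume z (by norm_num : (0:ℝ) ≤ 1/4) r,
          Measure.addHaar_closedBall_eq_addHaar_ball, Measure.addHaar_ball_center volume x]
      set V := volume (Metric.closedBall x r) with hV
      have hV0 : V ≠ 0 := (Metric.measure_closedBall_pos volume x hr0).ne'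
      have hVtop : V ≠ ⊤ := measure_closedBall_lt_top.ne
      have h3 : volume (S ∩ Metric.closedBall x r) ≤ V - κ * V := by
        calc volume (S ∩ Metric.closedBall x r)
            ≤ volume (Metric.closedBall x r \ Metric.ball z (r/4)) := measure_mono hsub2
          _ = V - volume (Metric.ball z (r/4)) :=
              measure_diff hsub1 measurableSet_ball.nullMeasurableSet measure_ball_lt_top.ne
          _ = V - κ * V := by rw [hvb]
      have h4 : V - κ * V ≤ (1 - κ) * V := by
        rw [tsub_le_iff_right]
        have hVeq : V = (1 - κ) * V + κ * V := by
          rw [← add_mul, tsub_add_cancel_of_le hκ1, one_mul]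
        exact hVeq.le
      have hle : volume (S ∩ Metric.closedBall x r) / V ≤ 1 - κ :=
        ENNReal.div_le_of_le_mul (h3.trans h4)
      exact lt_irrefl _ (hr1.trans_le hle)
    have hae : ∀ᵐ x ∂(volume.restrict S), False := by
      filter_upwards [Besicovitch.ae_tendsto_measure_inter_div volume S,
        ae_restrict_mem hS] with x hx hxS
      exact key x hxS hx
    have h0 : volume.restrict S Set.univ = 0 := by
      have := hae
      rw [ae_iff] at this
      simpa using this
    simpa [Measure.restrict_apply_univ] using h0

end Aux

/-- Kato's boundary-layer estimate: if `u ∈ H¹₀(Ω;ℝⁿ)`, `θ` is supported in the boundary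
strip `Γ_δ` with `|ρ²∇θ|_{L^∞(Γ_δ)} ≤ Cδ`, and the Hardy-type bound
`|u/ρ|²_{L²(Γ_δ)} ≤ C_H |∇u|²_{L²(Γ_δ)}` holds, then
`|∫_Ω ((u·∇)θ)·u dx| ≤ C' δ |∇u|²_{L²(Γ_δ)}` with `C'` independent of `δ`. -/
theorem kato_boundary_layer_estimate {n : ℕ}
    (Ω : Set (EuclideanSpace ℝ (Fin n))) (hΩ : IsOpen Ω)
    (hbd : Bornology.IsBounded Ω) (C CH : ℝ) (hC : 0 < C) (hCH : 0 < CH) :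
    ∃ C' > (0 : ℝ), ∀ δ > (0 : ℝ),
      ∀ u θ : EuclideanSpace ℝ (Fin n) → EuclideanSpace ℝ (Fin n),
      ContDiff ℝ 1 u → (∀ x ∉ Ω, u x = 0) →
      ContDiff ℝ 1 θ →
      (∀ x ∈ Ω, x ∉ {y ∈ Ω | Metric.infDist y (frontier Ω) < δ} → θ x = 0) →
      (∀ x ∈ {y ∈ Ω | Metric.infDist y (frontier Ω) < δ},
        (Metric.infDist x (frontier Ω)) ^ 2 * ‖fderiv ℝ θ x‖ ≤ C * δ) →
      ((∫ x in {y ∈ Ω | Metric.infDist y (frontier Ω) < δ},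
          ‖u x‖ ^ 2 / (Metric.infDist x (frontier Ω)) ^ 2)
        ≤ CH * ∫ x in {y ∈ Ω | Metric.infDist y (frontier Ω) < δ},
            ‖fderiv ℝ u x‖ ^ 2) →
      |∫ x in Ω, inner ℝ (fderiv ℝ θ x (u x)) (u x)|
        ≤ C' * δ * ∫ x in {y ∈ Ω | Metric.infDist y (frontier Ω) < δ},
            ‖fderiv ℝ u x‖ ^ 2 := by
  refine ⟨C * CH, mul_pos hC hCH, ?_⟩
  intro δ hδ u θ hu hu0 hθ hθ0 hθgrad hHardy
  set Γ : Set (EuclideanSpace ℝ (Fin n)) := {y ∈ Ω | Metric.infDist y (frontier Ω) < δ} with hΓ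
  have hΓsub : Γ ⊆ Ω := fun y hy => hy.1
  have hIR : (0:ℝ) ≤ ∫ x in Γ, ‖fderiv ℝ u x‖ ^ 2 :=
    integral_nonneg fun x => sq_nonneg _
  -- trivial case : subsingleton space
  rcases subsingleton_or_nontrivial (EuclideanSpace ℝ (Fin n)) with hsub | hnt
  · have hz : ∀ x : EuclideanSpace ℝ (Fin n), (inner ℝ (fderiv ℝ θ x (u x)) (u x) : ℝ) = 0 := fun x => by
      rw [Subsingleton.elim (u x) (0 : EuclideanSpace ℝ (Fin n))]
      simp
    simp only [hz, integral_zero, abs_zero]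
    exact mul_nonneg (by positivity) hIR
  -- trivial case : empty domain
  rcases Set.eq_empty_or_nonempty Ω with hΩe | hΩne
  · have h1 : (volume : Measure (EuclideanSpace ℝ (Fin n))).restrict Ω = 0 := by
      rw [hΩe]; exact Measure.restrict_empty
    have hΓe : Γ = ∅ := by rw [hΓ, hΩe]; ext y; simp
    have h2 : (volume : Measure (EuclideanSpace ℝ (Fin n))).restrict Γ = 0 := by
      rw [hΓe]; exact Measure.restrict_empty
    rw [h1, h2, integral_zero_measure, integral_zero_measure, abs_zero, mul_zero]
  -- the frontier is nonempty
  have hFne : (frontier Ω).Nonempty := by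
    rcases Set.eq_empty_or_nonempty (frontier Ω) with hfe | h
    · exfalso
      have hclopen : IsClopen Ω := isClopen_iff_frontier_eq_empty.mpr hfe
      rcases isClopen_iff.mp hclopen with h' | h'
      · exact hΩne.ne_empty h'
      · exact NormedSpace.unbounded_univ ℝ (EuclideanSpace ℝ (Fin n)) (h' ▸ hbd)
    · exact h
  have hρpos : ∀ x ∈ Ω, 0 < Metric.infDist x (frontier Ω) := by
    intro x hx
    rw [← isClosed_frontier.notMem_iff_infDist_pos hFne]
    rw [hΩ.frontier_eq]
    exact fun h => h.2 hx
  -- compact support machinery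
  have hsuppu : Function.support u ⊆ Ω := fun x hx => by
    by_contra hxΩ; exact hx (hu0 x hxΩ)
  have hcu : HasCompactSupport u :=
    IsCompact.of_isClosed_subset
      (Metric.isCompact_of_isClosed_isBounded isClosed_closure hbd.closure)
      (isClosed_tsupport u) (closure_mono hsuppu)
  have hfc : Continuous fun x : EuclideanSpace ℝ (Fin n) => (inner ℝ (fderiv ℝ θ x (u x)) (u x) : ℝ) :=
    Continuous.inner ((hθ.continuous_fderiv one_ne_zero).clm_apply hu.continuous) hu.continuous
  have hfsupp : Function.support (fun x : EuclideanSpace ℝ (Fin n) => (inner ℝ (fderiv ℝ θ x (u x)) (u x) : ℝ))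
      ⊆ Function.support u := by
    intro x hx
    rw [Function.mem_support] at hx ⊢
    intro h
    exact hx (by rw [h]; simp)
  have hcf : HasCompactSupport fun x : EuclideanSpace ℝ (Fin n) => (inner ℝ (fderiv ℝ θ x (u x)) (u x) : ℝ) :=
    IsCompact.of_isClosed_subset hcu (isClosed_tsupport _) (closure_mono hfsupp)
  have hfi : Integrable fun x : EuclideanSpace ℝ (Fin n) => (inner ℝ (fderiv ℝ θ x (u x)) (u x) : ℝ) :=
    hfc.integrable_of_hasCompactSupport hcf
  have hΓm : MeasurableSet Γ := by
    have : Γ = Ω ∩ {y : EuclideanSpace ℝ (Fin n) | Metric.infDist y (frontier Ω) < δ} := rfl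
    rw [this]
    exact hΩ.measurableSet.inter
      (isOpen_lt (Metric.continuous_infDist_pt _) continuous_const).measurableSet
  -- pointwise bound on the closure of the strip
  have hbound : ∀ x ∈ closure Γ, Metric.infDist x (frontier Ω) ^ 2 * ‖fderiv ℝ θ x‖ ≤ C * δ := by
    have hcl : IsClosed {y : EuclideanSpace ℝ (Fin n) | Metric.infDist y (frontier Ω) ^ 2 * ‖fderiv ℝ θ y‖ ≤ C * δ} :=
      isClosed_le (Continuous.mul ((Metric.continuous_infDist_pt _).pow 2)
        (hθ.continuous_fderiv one_ne_zero).norm) continuous_const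
    exact fun x hx => closure_minimal (fun y hy => hθgrad y hy) hcl hx
  -- Lipschitz bound for u near the boundary
  obtain ⟨K, hK⟩ := ContDiff.lipschitzWith_of_hasCompactSupport hcu hu one_ne_zero
  have hKle : ∀ x ∈ Ω, ‖u x‖ ≤ (K:ℝ) * Metric.infDist x (frontier Ω) := by
    intro x hx
    obtain ⟨p, hpF, hpd⟩ := isClosed_frontier.exists_infDist_eq_dist hFne x
    have hup : u p = 0 := by
      apply hu0
      rw [hΩ.frontier_eq] at hpF
      exact hpF.2
    calc ‖u x‖ = ‖u x - u p‖ := by rw [hup, sub_zero]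
      _ = dist (u x) (u p) := (dist_eq_norm _ _).symm
      _ ≤ (K:ℝ) * dist x p := hK.dist_le_mul x p
      _ = (K:ℝ) * Metric.infDist x (frontier Ω) := by rw [hpd]
  -- the weight is integrable on the strip
  have hgm : AEStronglyMeasurable (fun x : EuclideanSpace ℝ (Fin n) => ‖u x‖^2 / Metric.infDist x (frontier Ω) ^ 2) volume :=
    ((hu.continuous.norm.pow 2).measurable.div
      (((Metric.continuous_infDist_pt _).pow 2).measurable)).aestronglyMeasurable
  have hΓfin : volume Γ ≠ ⊤ :=
    ((measure_mono hΓsub).trans_lt hbd.measure_lt_top).ne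
  have hgbdd : ∀ᵐ x ∂(volume.restrict Γ), ‖‖u x‖^2 / Metric.infDist x (frontier Ω) ^ 2‖ ≤ (K:ℝ)^2 := by
    filter_upwards [ae_restrict_mem hΓm] with x hx
    have hxΩ : x ∈ Ω := hx.1
    have h1 : 0 < Metric.infDist x (frontier Ω) := hρpos x hxΩ
    have h2 : ‖u x‖^2 ≤ (K:ℝ)^2 * Metric.infDist x (frontier Ω)^2 := by
      nlinarith [hKle x hxΩ, norm_nonneg (u x), h1.le, K.coe_nonneg]
    rw [Real.norm_eq_abs, abs_of_nonneg (by positivity), div_le_iff₀ (by positivity)]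
    linarith
  have hgi : IntegrableOn (fun x : EuclideanSpace ℝ (Fin n) => ‖u x‖^2 / Metric.infDist x (frontier Ω) ^ 2) Γ :=
    Measure.integrableOn_of_bounded hΓfin hgm hgbdd
  -- a.e. vanishing on Ω \ Γ
  have hzero : ∫ x in Ω \ Γ, |(inner ℝ (fderiv ℝ θ x (u x)) (u x) : ℝ)| = 0 := by
    have hnull := levelset_null (frontier Ω) isClosed_frontier hFne hδ
    have h' : ∀ᵐ x : EuclideanSpace ℝ (Fin n) ∂volume, ¬ (Metric.infDist x (frontier Ω) = δ) := by
      rw [ae_iff]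
      simpa using hnull
    have hae : ∀ᵐ x : EuclideanSpace ℝ (Fin n) ∂volume, x ∈ Ω \ Γ →
        |(inner ℝ (fderiv ℝ θ x (u x)) (u x) : ℝ)| = 0 := by
      filter_upwards [h'] with x hxne hxmem
      have hxΩ : x ∈ Ω := hxmem.1
      have hxρ : δ ≤ Metric.infDist x (frontier Ω) := by
        by_contra h
        exact hxmem.2 ⟨hxΩ, lt_of_not_ge h⟩
      have hxρ' : δ < Metric.infDist x (frontier Ω) := lt_of_le_of_ne hxρ (fun h => hxne h.symm)
      have hopen : IsOpen (Ω ∩ {y : EuclideanSpace ℝ (Fin n) | δ < Metric.infDist y (frontier Ω)}) :=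
        hΩ.inter (isOpen_lt continuous_const (Metric.continuous_infDist_pt _))
      have hev : θ =ᶠ[nhds x] (fun _ => (0:EuclideanSpace ℝ (Fin n))) := by
        filter_upwards [hopen.mem_nhds ⟨hxΩ, hxρ'⟩] with y hy
        exact hθ0 y hy.1 (fun hyΓ => absurd hyΓ.2 (not_lt.2 hy.2.le))
      have hdz : fderiv ℝ θ x = 0 := by
        rw [hev.fderiv_eq]
        simp
      rw [hdz]
      simp
    rw [setIntegral_congr_ae (hΩ.measurableSet.diff hΓm) hae]
    simp
  -- main estimate
  calc |∫ x in Ω, (inner ℝ (fderiv ℝ θ x (u x)) (u x) : ℝ)|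
      ≤ ∫ x in Ω, |(inner ℝ (fderiv ℝ θ x (u x)) (u x) : ℝ)| := by
        simpa [Real.norm_eq_abs] using
          norm_integral_le_integral_norm (μ := volume.restrict Ω)
            (fun x : EuclideanSpace ℝ (Fin n) => (inner ℝ (fderiv ℝ θ x (u x)) (u x) : ℝ))
    _ = (∫ x in Γ, |(inner ℝ (fderiv ℝ θ x (u x)) (u x) : ℝ)|)
        + ∫ x in Ω \ Γ, |(inner ℝ (fderiv ℝ θ x (u x)) (u x) : ℝ)| := by
        rw [← integral_inter_add_diff hΓm (hfi.abs.integrableOn (s := Ω)),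
          Set.inter_eq_self_of_subset_right hΓsub]
    _ = ∫ x in Γ, |(inner ℝ (fderiv ℝ θ x (u x)) (u x) : ℝ)| := by
        rw [hzero, add_zero]
    _ ≤ ∫ x in Γ, C * δ * (‖u x‖^2 / Metric.infDist x (frontier Ω) ^ 2) := by
        refine setIntegral_mono_on (hfi.abs.integrableOn (s := Γ))
          (hgi.const_mul (C * δ)) hΓm ?_
        intro x hx
        have hxΩ : x ∈ Ω := hx.1
        have h1 : 0 < Metric.infDist x (frontier Ω) := hρpos x hxΩ
        have h2 : Metric.infDist x (frontier Ω) ^ 2 * ‖fderiv ℝ θ x‖ ≤ C * δ := hbound x (subset_closure hx)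
        have h3 : |(inner ℝ (fderiv ℝ θ x (u x)) (u x) : ℝ)|
            ≤ ‖fderiv ℝ θ x‖ * ‖u x‖ * ‖u x‖ := by
          calc |(inner ℝ (fderiv ℝ θ x (u x)) (u x) : ℝ)|
              ≤ ‖fderiv ℝ θ x (u x)‖ * ‖u x‖ := abs_real_inner_le_norm _ _
            _ ≤ ‖fderiv ℝ θ x‖ * ‖u x‖ * ‖u x‖ := by
                have := (fderiv ℝ θ x).le_opNorm (u x)
                nlinarith [norm_nonneg (u x)]
        have h4 : ‖fderiv ℝ θ x‖ * ‖u x‖ * ‖u x‖ ≤ C * δ * (‖u x‖^2 / Metric.infDist x (frontier Ω) ^ 2) := by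
          rw [← sub_nonneg] at h2 ⊢
          have hρ2 : (0:ℝ) < Metric.infDist x (frontier Ω) ^ 2 := by positivity
          have key : C * δ * (‖u x‖^2 / Metric.infDist x (frontier Ω) ^ 2) - ‖fderiv ℝ θ x‖ * ‖u x‖ * ‖u x‖
              = (C * δ - Metric.infDist x (frontier Ω) ^ 2 * ‖fderiv ℝ θ x‖) * (‖u x‖^2 / Metric.infDist x (frontier Ω) ^ 2) := by
            field_simp
          rw [key]
          positivity
        linarith
    _ = C * δ * ∫ x in Γ, ‖u x‖^2 / Metric.infDist x (frontier Ω) ^ 2 := by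
        rw [integral_const_mul]
    _ ≤ C * δ * (CH * ∫ x in Γ, ‖fderiv ℝ u x‖ ^ 2) := by
        apply mul_le_mul_of_nonneg_left hHardy (by positivity)
    _ = C * CH * δ * ∫ x in Γ, ‖fderiv ℝ u x‖ ^ 2 := by ring
end

section
/- Let u, F solve (in a classical sense, on Ω × [0,T] with Ω ⊆ ℝⁿ) the transport equation ∂_t F + (u·∇)F = (∇u)F with ∇·u = 0, where F is matrix-valued and (∇u)_{ij} = ∂_j u_i. Then g = ∇·F (the vector with components g_j = Σ_i ∂_i F_{ij}) satisfies the pure transport equation ∂_t g + (u·∇)g = 0. In particular, if ∇·F = 0 at t = 0 and u is smooth so that transport preserves zero initial data, then ∇·F = 0 for all t ∈ [0,T]. -/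
/-- Partial derivative in the `i`-th coordinate direction. -/
noncomputable def pd {n : ℕ} (i : Fin n) (g : EuclideanSpace ℝ (Fin n) → ℝ)
    (x : EuclideanSpace ℝ (Fin n)) : ℝ :=
  fderiv ℝ g x (EuclideanSpace.single i 1)

open ContinuousLinearMap

variable {n : ℕ}

lemma slice_time {f : ℝ × EuclideanSpace ℝ (Fin n) → ℝ} {t : ℝ}
    {x : EuclideanSpace ℝ (Fin n)} (hf : DifferentiableAt ℝ f (t, x)) :
    HasDerivAt (fun s => f (s, x)) (fderiv ℝ f (t, x) (1, 0)) t :=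
  hf.hasFDerivAt.comp_hasDerivAt t ((hasDerivAt_id t).prodMk (hasDerivAt_const t x))

lemma slice_space {f : ℝ × EuclideanSpace ℝ (Fin n) → ℝ} {t : ℝ}
    {x : EuclideanSpace ℝ (Fin n)} (hf : DifferentiableAt ℝ f (t, x)) :
    HasFDerivAt (fun y => f (t, y))
      ((fderiv ℝ f (t, x)).comp (inr ℝ ℝ (EuclideanSpace ℝ (Fin n)))) x :=
  hf.hasFDerivAt.comp x (hasFDerivAt_prodMk_right t x)

lemma pd_slice {f : ℝ × EuclideanSpace ℝ (Fin n) → ℝ} {t : ℝ}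
    {x : EuclideanSpace ℝ (Fin n)} (hf : DifferentiableAt ℝ f (t, x)) (k : Fin n) :
    fderiv ℝ (fun y => f (t, y)) x (EuclideanSpace.single k 1)
      = fderiv ℝ f (t, x) (0, EuclideanSpace.single k 1) := by
  rw [(slice_space hf).fderiv]; simp

lemma hasFDerivAt_fderiv_apply {f : ℝ × EuclideanSpace ℝ (Fin n) → ℝ}
    (hf : ContDiff ℝ 2 f) (p : ℝ × EuclideanSpace ℝ (Fin n))
    (v : ℝ × EuclideanSpace ℝ (Fin n)) :
    HasFDerivAt (fun q => fderiv ℝ f q v)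
      ((ContinuousLinearMap.apply ℝ ℝ v).comp (fderiv ℝ (fderiv ℝ f) p)) p := by
  have h1 : ContDiff ℝ 1 (fderiv ℝ f) := hf.fderiv_right (by norm_num)
  exact (ContinuousLinearMap.apply ℝ ℝ v).hasFDerivAt.comp p
    ((h1.differentiable one_ne_zero (p)).hasFDerivAt)

lemma symm2 {f : ℝ × EuclideanSpace ℝ (Fin n) → ℝ} (hf : ContDiff ℝ 2 f)
    (p a b : ℝ × EuclideanSpace ℝ (Fin n)) :
    fderiv ℝ (fderiv ℝ f) p a b = fderiv ℝ (fderiv ℝ f) p b a :=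
  (hf.contDiffAt.isSymmSndFDerivAt (by simp)) a b

/-- time derivative of `s ↦ ∂f/∂v (s,x)` -/
lemma T2 {f : ℝ × EuclideanSpace ℝ (Fin n) → ℝ} (hf : ContDiff ℝ 2 f) (t : ℝ)
    (x : EuclideanSpace ℝ (Fin n)) (v : ℝ × EuclideanSpace ℝ (Fin n)) :
    HasDerivAt (fun s => fderiv ℝ f (s, x) v)
      (fderiv ℝ (fderiv ℝ f) (t, x) (1, 0) v) t := by
  have h := slice_time (f := fun q => fderiv ℝ f q v) (t := t) (x := x)
    (hasFDerivAt_fderiv_apply hf (t, x) v).differentiableAt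
  rwa [(hasFDerivAt_fderiv_apply hf (t, x) v).fderiv] at h

/-- spatial derivative of `y ↦ ∂f/∂v (t,y)` -/
lemma S2 {f : ℝ × EuclideanSpace ℝ (Fin n) → ℝ} (hf : ContDiff ℝ 2 f) (t : ℝ)
    (x : EuclideanSpace ℝ (Fin n)) (v : ℝ × EuclideanSpace ℝ (Fin n)) :
    HasFDerivAt (fun y => fderiv ℝ f (t, y) v)
      ((((ContinuousLinearMap.apply ℝ ℝ v).comp (fderiv ℝ (fderiv ℝ f) (t, x))).comp
        (inr ℝ ℝ (EuclideanSpace ℝ (Fin n))))) x :=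
  (hasFDerivAt_fderiv_apply hf (t, x) v).comp x (hasFDerivAt_prodMk_right t x)

lemma S2_pd {f : ℝ × EuclideanSpace ℝ (Fin n) → ℝ} (hf : ContDiff ℝ 2 f) (t : ℝ)
    (x : EuclideanSpace ℝ (Fin n)) (v : ℝ × EuclideanSpace ℝ (Fin n)) (i : Fin n) :
    fderiv ℝ (fun y => fderiv ℝ f (t, y) v) x (EuclideanSpace.single i 1)
      = fderiv ℝ (fderiv ℝ f) (t, x) (0, EuclideanSpace.single i 1) v := by
  rw [(S2 hf t x v).fderiv]; simp

/-- If `F` solves the deformation-gradient equation `∂ₜF + (u·∇)F = (∇u)F` with `∇·u = 0`,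
then the (column-wise) divergence `g_j = Σᵢ ∂ᵢ F_{ij}` solves the pure transport equation
`∂ₜ g + (u·∇)g = 0`. In particular, if `∇·F = 0` at `t = 0` and transport preserves zero
initial data, then `∇·F = 0` on `[0,T]`. -/
theorem div_deformation_tensor_transported {n : ℕ} (T : ℝ) (hT : 0 < T)
    (Ω : Set (EuclideanSpace ℝ (Fin n))) (hΩ : IsOpen Ω)
    (u : ℝ → EuclideanSpace ℝ (Fin n) → EuclideanSpace ℝ (Fin n))
    (F : ℝ → EuclideanSpace ℝ (Fin n) → Fin n → Fin n → ℝ)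
    (hu : ∀ i, ContDiff ℝ 2 fun p : ℝ × EuclideanSpace ℝ (Fin n) => u p.1 p.2 i)
    (hF : ∀ i j, ContDiff ℝ 2 fun p : ℝ × EuclideanSpace ℝ (Fin n) => F p.1 p.2 i j)
    (hdiv : ∀ t ∈ Set.Icc 0 T, ∀ x ∈ Ω, ∑ k, pd k (fun y => u t y k) x = 0)
    (heq : ∀ t ∈ Set.Icc 0 T, ∀ x ∈ Ω, ∀ i j,
      deriv (fun s => F s x i j) t + ∑ k, u t x k * pd k (fun y => F t y i j) x
        = ∑ k, pd k (fun y => u t y i) x * F t x k j)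
    (htransport : ∀ g : ℝ → EuclideanSpace ℝ (Fin n) → ℝ,
      (∀ t ∈ Set.Icc 0 T, ∀ x ∈ Ω,
        deriv (fun s => g s x) t + ∑ k, u t x k * pd k (g t) x = 0) →
      (∀ x ∈ Ω, g 0 x = 0) → ∀ t ∈ Set.Icc 0 T, ∀ x ∈ Ω, g t x = 0)
    (h0 : ∀ x ∈ Ω, ∀ j, ∑ i, pd i (fun y => F 0 y i j) x = 0) :
    (∀ t ∈ Set.Icc 0 T, ∀ x ∈ Ω, ∀ j,
      deriv (fun s => ∑ i, pd i (fun y => F s y i j) x) t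
        + ∑ k, u t x k * pd k (fun y => ∑ i, pd i (fun z => F t z i j) y) x = 0) ∧
    (∀ t ∈ Set.Icc 0 T, ∀ x ∈ Ω, ∀ j, ∑ i, pd i (fun y => F t y i j) x = 0) := by
  have key : ∀ t ∈ Set.Icc 0 T, ∀ x ∈ Ω, ∀ j,
      deriv (fun s => ∑ i, pd i (fun y => F s y i j) x) t
        + ∑ k, u t x k * pd k (fun y => ∑ i, pd i (fun z => F t z i j) y) x = 0 := by
    intro t ht x hx j
    have hDf : ∀ (i : Fin n) (p : ℝ × EuclideanSpace ℝ (Fin n)), DifferentiableAt ℝ (fun p : ℝ × EuclideanSpace ℝ (Fin n) => F p.1 p.2 i j) p :=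
      fun i p => ((hF i j).differentiable (by norm_num)).differentiableAt
    have hDv : ∀ (k : Fin n) (p : ℝ × EuclideanSpace ℝ (Fin n)), DifferentiableAt ℝ (fun p : ℝ × EuclideanSpace ℝ (Fin n) => u p.1 p.2 k) p :=
      fun k p => ((hu k).differentiable (by norm_num)).differentiableAt
    have hpdF : ∀ (s : ℝ) (y : EuclideanSpace ℝ (Fin n)) (i k : Fin n),
        pd k (fun z => F s z i j) y = fderiv ℝ (fun p : ℝ × EuclideanSpace ℝ (Fin n) => F p.1 p.2 i j) (s, y) (0, EuclideanSpace.single k 1) :=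
      fun s y i k => pd_slice (hDf i (s, y)) k
    have hpdu : ∀ (s : ℝ) (y : EuclideanSpace ℝ (Fin n)) (i k : Fin n),
        pd k (fun z => u s z i) y = fderiv ℝ (fun p : ℝ × EuclideanSpace ℝ (Fin n) => u p.1 p.2 i) (s, y) (0, EuclideanSpace.single k 1) :=
      fun s y i k => pd_slice (hDv i (s, y)) k
    have hderF : ∀ (s : ℝ) (y : EuclideanSpace ℝ (Fin n)) (i : Fin n),
        deriv (fun s' => F s' y i j) s = fderiv ℝ (fun p : ℝ × EuclideanSpace ℝ (Fin n) => F p.1 p.2 i j) (s, y) (1, 0) :=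
      fun s y i => (slice_time (hDf i (s, y))).deriv
    have hfeq : (fun s => ∑ i, pd i (fun y => F s y i j) x)
        = fun s => ∑ i, fderiv ℝ (fun p : ℝ × EuclideanSpace ℝ (Fin n) => F p.1 p.2 i j) (s, x) (0, EuclideanSpace.single i 1) :=
      funext fun s => Finset.sum_congr rfl fun i _ => hpdF s x i i
    have hA : deriv (fun s => ∑ i, pd i (fun y => F s y i j) x) t
        = ∑ i, fderiv ℝ (fderiv ℝ (fun p : ℝ × EuclideanSpace ℝ (Fin n) => F p.1 p.2 i j)) (t, x) (1, 0) (0, EuclideanSpace.single i 1) := by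
      rw [hfeq]
      exact (HasDerivAt.fun_sum fun i (_ : i ∈ Finset.univ) => T2 (hF i j) t x (0, EuclideanSpace.single i 1)).deriv
    have hGeq : (fun y => ∑ i, pd i (fun z => F t z i j) y)
        = fun y => ∑ i, fderiv ℝ (fun p : ℝ × EuclideanSpace ℝ (Fin n) => F p.1 p.2 i j) (t, y) (0, EuclideanSpace.single i 1) :=
      funext fun y => Finset.sum_congr rfl fun i _ => hpdF t y i i
    have hB : ∀ k : Fin n, pd k (fun y => ∑ i, pd i (fun z => F t z i j) y) x
        = ∑ i, fderiv ℝ (fderiv ℝ (fun p : ℝ × EuclideanSpace ℝ (Fin n) => F p.1 p.2 i j)) (t, x) (0, EuclideanSpace.single i 1) (0, EuclideanSpace.single k 1) := by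
      intro k
      show fderiv ℝ (fun y => ∑ i, pd i (fun z => F t z i j) y) x
        (EuclideanSpace.single k 1) = _
      rw [hGeq, (HasFDerivAt.fun_sum fun i (_ : i ∈ Finset.univ) =>
        S2 (hF i j) t x (0, EuclideanSpace.single i 1)).fderiv]
      simp only [ContinuousLinearMap.coe_sum', Finset.sum_apply,
        ContinuousLinearMap.comp_apply, ContinuousLinearMap.inr_apply,
        ContinuousLinearMap.apply_apply]
      exact Finset.sum_congr rfl fun i _ => symm2 (hF i j) (t, x) _ _
    have hdivD : ∀ k : Fin n, ∑ i, fderiv ℝ (fderiv ℝ (fun p : ℝ × EuclideanSpace ℝ (Fin n) => u p.1 p.2 i)) (t, x) (0, EuclideanSpace.single k 1) (0, EuclideanSpace.single i 1) = 0 := by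
      intro k
      have hΨ := HasFDerivAt.fun_sum fun i (_ : i ∈ Finset.univ) => S2 (hu i) t x (0, EuclideanSpace.single i 1)
      have hzero : (fun y => ∑ i, fderiv ℝ (fun p : ℝ × EuclideanSpace ℝ (Fin n) => u p.1 p.2 i) (t, y) (0, EuclideanSpace.single i 1))
          =ᶠ[nhds x] fun _ => (0 : ℝ) := by
        filter_upwards [hΩ.mem_nhds hx] with y hy
        have h := hdiv t ht y hy
        simp only [hpdu] at h
        exact h
      have hD0 := hΨ.fderiv.symm.trans (hzero.fderiv_eq.trans (fderiv_const_apply 0))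
      have h0'' := congrArg (fun L : EuclideanSpace ℝ (Fin n) →L[ℝ] ℝ => L (EuclideanSpace.single k 1)) hD0
      simpa using h0''
    have key1 : ∀ i : Fin n,
        fderiv ℝ (fderiv ℝ (fun p : ℝ × EuclideanSpace ℝ (Fin n) => F p.1 p.2 i j)) (t, x) (0, EuclideanSpace.single i 1) (1, 0)
        + (∑ k, (u t x k * fderiv ℝ (fderiv ℝ (fun p : ℝ × EuclideanSpace ℝ (Fin n) => F p.1 p.2 i j)) (t, x) (0, EuclideanSpace.single i 1) (0, EuclideanSpace.single k 1)
            + fderiv ℝ (fun p : ℝ × EuclideanSpace ℝ (Fin n) => F p.1 p.2 i j) (t, x) (0, EuclideanSpace.single k 1) * fderiv ℝ (fun p : ℝ × EuclideanSpace ℝ (Fin n) => u p.1 p.2 k) (t, x) (0, EuclideanSpace.single i 1)))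
        - (∑ k, (fderiv ℝ (fun p : ℝ × EuclideanSpace ℝ (Fin n) => u p.1 p.2 i) (t, x) (0, EuclideanSpace.single k 1) * fderiv ℝ (fun p : ℝ × EuclideanSpace ℝ (Fin n) => F p.1 p.2 k j) (t, x) (0, EuclideanSpace.single i 1)
            + F t x k j * fderiv ℝ (fderiv ℝ (fun p : ℝ × EuclideanSpace ℝ (Fin n) => u p.1 p.2 i)) (t, x) (0, EuclideanSpace.single i 1) (0, EuclideanSpace.single k 1))) = 0 := by
      intro i
      have hΦ := ((S2 (hF i j) t x (1, 0)).add
          (HasFDerivAt.fun_sum fun k (_ : k ∈ Finset.univ) =>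
            (slice_space (hDv k (t, x))).mul (S2 (hF i j) t x (0, EuclideanSpace.single k 1)))).sub
        (HasFDerivAt.fun_sum fun k (_ : k ∈ Finset.univ) =>
          (S2 (hu i) t x (0, EuclideanSpace.single k 1)).mul (slice_space (hDf k (t, x))))
      have hzero : (fun y => fderiv ℝ (fun p : ℝ × EuclideanSpace ℝ (Fin n) => F p.1 p.2 i j) (t, y) (1, 0)
            + (∑ k, u t y k * fderiv ℝ (fun p : ℝ × EuclideanSpace ℝ (Fin n) => F p.1 p.2 i j) (t, y) (0, EuclideanSpace.single k 1))
            - ∑ k, fderiv ℝ (fun p : ℝ × EuclideanSpace ℝ (Fin n) => u p.1 p.2 i) (t, y) (0, EuclideanSpace.single k 1) * F t y k j)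
          =ᶠ[nhds x] fun _ => (0 : ℝ) := by
        filter_upwards [hΩ.mem_nhds hx] with y hy
        have h := heq t ht y hy i j
        rw [hderF t y i] at h
        simp only [hpdF, hpdu] at h
        linarith [h]
      have hD0 := hΦ.fderiv.symm.trans (hzero.fderiv_eq.trans (fderiv_const_apply 0))
      have h0'' := congrArg (fun L : EuclideanSpace ℝ (Fin n) →L[ℝ] ℝ => L (EuclideanSpace.single i 1)) hD0
      simp only [ContinuousLinearMap.add_apply, ContinuousLinearMap.sub_apply,
        ContinuousLinearMap.coe_sum', Finset.sum_apply, ContinuousLinearMap.smul_apply,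
        ContinuousLinearMap.comp_apply, ContinuousLinearMap.inr_apply,
        ContinuousLinearMap.apply_apply, ContinuousLinearMap.zero_apply,
        smul_eq_mul] at h0''
      linarith [h0'']
    rw [hA]
    simp only [hB]
    have hswapA : (∑ i, fderiv ℝ (fderiv ℝ (fun p : ℝ × EuclideanSpace ℝ (Fin n) => F p.1 p.2 i j)) (t, x) (1, 0) (0, EuclideanSpace.single i 1))
        = ∑ i, fderiv ℝ (fderiv ℝ (fun p : ℝ × EuclideanSpace ℝ (Fin n) => F p.1 p.2 i j)) (t, x) (0, EuclideanSpace.single i 1) (1, 0) :=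
      Finset.sum_congr rfl fun i _ => symm2 (hF i j) (t, x) _ _
    have hdivD' : ∀ k : Fin n, (∑ i, fderiv ℝ (fderiv ℝ (fun p : ℝ × EuclideanSpace ℝ (Fin n) => u p.1 p.2 i)) (t, x) (0, EuclideanSpace.single i 1) (0, EuclideanSpace.single k 1)) = 0 :=
      fun k => (Finset.sum_congr rfl fun i _ => symm2 (hu i) (t, x) _ _).trans (hdivD k)
    rw [hswapA]
    have S : (∑ i, (fderiv ℝ (fderiv ℝ (fun p : ℝ × EuclideanSpace ℝ (Fin n) => F p.1 p.2 i j)) (t, x) (0, EuclideanSpace.single i 1) (1, 0)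
        + (∑ k, (u t x k * fderiv ℝ (fderiv ℝ (fun p : ℝ × EuclideanSpace ℝ (Fin n) => F p.1 p.2 i j)) (t, x) (0, EuclideanSpace.single i 1) (0, EuclideanSpace.single k 1)
            + fderiv ℝ (fun p : ℝ × EuclideanSpace ℝ (Fin n) => F p.1 p.2 i j) (t, x) (0, EuclideanSpace.single k 1) * fderiv ℝ (fun p : ℝ × EuclideanSpace ℝ (Fin n) => u p.1 p.2 k) (t, x) (0, EuclideanSpace.single i 1)))
        - (∑ k, (fderiv ℝ (fun p : ℝ × EuclideanSpace ℝ (Fin n) => u p.1 p.2 i) (t, x) (0, EuclideanSpace.single k 1) * fderiv ℝ (fun p : ℝ × EuclideanSpace ℝ (Fin n) => F p.1 p.2 k j) (t, x) (0, EuclideanSpace.single i 1)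
            + F t x k j * fderiv ℝ (fderiv ℝ (fun p : ℝ × EuclideanSpace ℝ (Fin n) => u p.1 p.2 i)) (t, x) (0, EuclideanSpace.single i 1) (0, EuclideanSpace.single k 1))))) = 0 :=
      Finset.sum_eq_zero fun i _ => key1 i
    simp only [Finset.sum_add_distrib, Finset.sum_sub_distrib] at S
    have e1 : (∑ i, ∑ k, u t x k * fderiv ℝ (fderiv ℝ (fun p : ℝ × EuclideanSpace ℝ (Fin n) => F p.1 p.2 i j)) (t, x) (0, EuclideanSpace.single i 1) (0, EuclideanSpace.single k 1))
        = ∑ k, u t x k * ∑ i, fderiv ℝ (fderiv ℝ (fun p : ℝ × EuclideanSpace ℝ (Fin n) => F p.1 p.2 i j)) (t, x) (0, EuclideanSpace.single i 1) (0, EuclideanSpace.single k 1) := by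
      rw [Finset.sum_comm]
      exact Finset.sum_congr rfl fun k _ => (Finset.mul_sum _ _ _).symm
    have e2 : (∑ i, ∑ k, fderiv ℝ (fun p : ℝ × EuclideanSpace ℝ (Fin n) => F p.1 p.2 i j) (t, x) (0, EuclideanSpace.single k 1) * fderiv ℝ (fun p : ℝ × EuclideanSpace ℝ (Fin n) => u p.1 p.2 k) (t, x) (0, EuclideanSpace.single i 1))
        = ∑ i, ∑ k, fderiv ℝ (fun p : ℝ × EuclideanSpace ℝ (Fin n) => u p.1 p.2 i) (t, x) (0, EuclideanSpace.single k 1) * fderiv ℝ (fun p : ℝ × EuclideanSpace ℝ (Fin n) => F p.1 p.2 k j) (t, x) (0, EuclideanSpace.single i 1) := by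
      rw [Finset.sum_comm]
      exact Finset.sum_congr rfl fun i _ => Finset.sum_congr rfl fun k _ => mul_comm _ _
    have e3 : (∑ i, ∑ k, F t x k j * fderiv ℝ (fderiv ℝ (fun p : ℝ × EuclideanSpace ℝ (Fin n) => u p.1 p.2 i)) (t, x) (0, EuclideanSpace.single i 1) (0, EuclideanSpace.single k 1)) = 0 := by
      rw [Finset.sum_comm]
      refine Finset.sum_eq_zero fun k _ => ?_
      rw [← Finset.mul_sum, hdivD' k, mul_zero]
    linarith [S, e1, e2, e3]
  refine ⟨key, ?_⟩
  intro t ht x hx j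
  exact htransport (fun s y => ∑ i, pd i (fun z => F s z i j) y)
    (fun t' ht' x' hx' => key t' ht' x' hx' j) (fun x' hx' => h0 x' hx' j) t ht x hx
end
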